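/- Assume the CFL condition. Then the one-step scheme map is monotone: for all summable sequences U = (U_j)_{j∈ℤ} and V = (V_j)_{j∈ℤ} with U_j ≤ V_j for every j ∈ ℤ, one has S(U)_i ≤ S(V)_i for every i ∈ ℤ. -/

import Mathlib

open MeasureTheory Filter Set

/-- The fractional Laplacian `L[φ](x) = c_λ ∫_{z ≠ 0} (φ(x+z) − φ(x))/|z|^{1+λ} dz`. -/
noncomputable def fracLap (clam lam : ℝ) (φ : ℝ → ℝ) (x : ℝ) : ℝ :=
  clam * ∫ z in ({0}ᶜ : Set ℝ), (φ (x + z) - φ x) / |z| ^ (1 + lam)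

/-- Indicator function of the cell `I_j = (jΔx, (j+1)Δx)`. -/
noncomputable def cellInd (Δx : ℝ) (j : ℤ) : ℝ → ℝ :=
  Set.indicator (Set.Ioo ((j : ℝ) * Δx) (((j : ℝ) + 1) * Δx)) 1

/-- The weights `G^i_j = ∫_{I_i} L[1_{I_j}](x) dx`. -/
noncomputable def Gw (clam lam Δx : ℝ) (i j : ℤ) : ℝ :=
  ∫ x in Set.Ioo ((i : ℝ) * Δx) (((i : ℝ) + 1) * Δx), fracLap clam lam (cellInd Δx j) x

/-- `A(u) = ∫_0^u a(s) ds`. -/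
noncomputable def Aint (a : ℝ → ℝ) (u : ℝ) : ℝ := ∫ s in (0:ℝ)..u, a s

/-- One step of the explicit scheme. -/
noncomputable def schemeStep (clam lam Δx Δt b : ℝ) (fhat : ℝ → ℝ → ℝ) (a : ℝ → ℝ)
    (U : ℤ → ℝ) (i : ℤ) : ℝ :=
  U i - (Δt / Δx) * (fhat (U i) (U (i + 1)) - fhat (U (i - 1)) (U i))
    + (Δt / Δx ^ 2) * (Aint a (U (i + 1)) - 2 * Aint a (U i) + Aint a (U (i - 1)))
    + (b * Δt / Δx) * ∑' j : ℤ, Gw clam lam Δx i j * U j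

/-- The scheme iterates: `U^0_i = (1/Δx)∫_{I_i} u₀` and `U^{n+1} = S(U^n)`. -/
noncomputable def Uiter (clam lam Δx Δt b : ℝ) (fhat : ℝ → ℝ → ℝ) (a : ℝ → ℝ)
    (u₀ : ℝ → ℝ) : ℕ → ℤ → ℝ
  | 0 => fun i => (1 / Δx) * ∫ x in Set.Ioo ((i : ℝ) * Δx) (((i : ℝ) + 1) * Δx), u₀ x
  | n + 1 => schemeStep clam lam Δx Δt b fhat a (Uiter clam lam Δx Δt b fhat a u₀ n)

/-- `d_λ = c_λ ( ∫_{|z|<1} |z|^{−λ} dz + ∫_{|z|>1} |z|^{−1−λ} dz )`. -/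
noncomputable def dlam (clam lam : ℝ) : ℝ :=
  clam * ((∫ z in {z : ℝ | |z| < 1}, |z| ^ (-lam)) + ∫ z in {z : ℝ | 1 < |z|}, |z| ^ (-1 - lam))

/-- The CFL condition: `f̂` is C¹ with bounded partial derivatives and
`(Δt/Δx)(‖∂₁f̂‖_∞ + ‖∂₂f̂‖_∞) + (2Δt/Δx²)‖a‖_∞ + b d_λ Δt/Δx^λ ≤ 1`. -/
def CFL (clam lam Δx Δt b : ℝ) (fhat : ℝ → ℝ → ℝ) (a : ℝ → ℝ) : Prop :=
  ContDiff ℝ 1 (fun p : ℝ × ℝ => fhat p.1 p.2) ∧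
  ∃ M1 M2 Ma : ℝ,
    (∀ u v : ℝ, |deriv (fun s => fhat s v) u| ≤ M1) ∧
    (∀ u v : ℝ, |deriv (fun s => fhat u s) v| ≤ M2) ∧
    (∀ s : ℝ, |a s| ≤ Ma) ∧
    (Δt / Δx) * (M1 + M2) + (2 * Δt / Δx ^ 2) * Ma + b * dlam clam lam * Δt / Δx ^ lam ≤ 1

/-- Standing assumptions on the data `f`, `a` and the numerical flux `f̂`. -/
structure SchemeData (f a : ℝ → ℝ) (fhat : ℝ → ℝ → ℝ) : Prop where
  hfLip : ∃ K : NNReal, LipschitzWith K f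
  hf0 : f 0 = 0
  haLip : ∃ K : NNReal, LipschitzWith K a
  haNonneg : ∀ s : ℝ, 0 ≤ a s
  haBdd : ∃ M : ℝ, ∀ s : ℝ, a s ≤ M
  hfhatLip : ∃ K : NNReal, LipschitzWith K (fun p : ℝ × ℝ => fhat p.1 p.2)
  hconsistent : ∀ u : ℝ, fhat u u = f u
  hmono1 : ∀ v : ℝ, Monotone (fun u => fhat u v)
  hmono2 : ∀ u : ℝ, Antitone (fun v => fhat u v)

section SchemeHelpers
variable {lam : ℝ}

lemma hp_lt (hlam : 0 < lam) : (-1 - lam : ℝ) < -1 := by linarith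

lemma integrableOn_absRpow_Ici (hlam : 0 < lam) {c : ℝ} (hc : 0 < c) :
    IntegrableOn (fun z : ℝ => |z| ^ (-1 - lam)) (Ici c) := by
  rw [integrableOn_Ici_iff_integrableOn_Ioi]
  exact (integrableOn_Ioi_rpow_of_lt (hp_lt hlam) hc).congr_fun
    (fun z hz => by rw [abs_of_pos (hc.trans hz)]) measurableSet_Ioi

lemma integral_absRpow_Ici (hlam : 0 < lam) {c : ℝ} (hc : 0 < c) :
    ∫ z in Ici c, |z| ^ (-1 - lam) = c ^ (-lam) / lam := by
  rw [integral_Ici_eq_integral_Ioi,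
    setIntegral_congr_fun measurableSet_Ioi
      (fun z hz => by rw [abs_of_pos (hc.trans hz)]),
    integral_Ioi_rpow_of_lt (hp_lt hlam) hc]
  have h : (-1 - lam + 1 : ℝ) = -lam := by ring
  rw [h]
  rw [neg_div, div_neg, neg_neg]

lemma integrableOn_comp_neg {f : ℝ → ℝ} {s : Set ℝ} (hs : MeasurableSet s)
    (h : IntegrableOn f s) : IntegrableOn (fun x => f (-x)) ((fun x : ℝ => -x) ⁻¹' s) := by
  have A : MeasurableEmbedding fun x : ℝ => -x :=
    (Homeomorph.neg ℝ).isClosedEmbedding.measurableEmbedding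
  have h2 : Integrable f
      (Measure.map (fun x : ℝ => -x) (volume.restrict ((fun x : ℝ => -x) ⁻¹' s))) := by
    rw [← Measure.restrict_map A.measurable hs, Measure.map_neg_eq_self]
    exact h
  exact A.integrable_map_iff.mp h2

lemma integrableOn_absRpow_Iic (hlam : 0 < lam) {c : ℝ} (hc : 0 < c) :
    IntegrableOn (fun z : ℝ => |z| ^ (-1 - lam)) (Iic (-c)) := by
  have h := integrableOn_comp_neg measurableSet_Ici (integrableOn_absRpow_Ici hlam hc)
  have hpre : ((fun x : ℝ => -x) ⁻¹' Ici c) = Iic (-c) := by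
    ext x; simp [le_neg]
  rw [hpre] at h
  exact h.congr_fun (fun z _ => by simp only [abs_neg]) measurableSet_Iic

lemma integral_absRpow_Iic (hlam : 0 < lam) {c : ℝ} (hc : 0 < c) :
    ∫ z in Iic (-c), |z| ^ (-1 - lam) = c ^ (-lam) / lam := by
  have h := integral_comp_neg_Iic (-c) (fun z : ℝ => |z| ^ (-1 - lam))
  rw [neg_neg] at h
  rw [setIntegral_congr_fun measurableSet_Iic (fun z _ => by rw [← abs_neg]), h,
    ← integral_Ici_eq_integral_Ioi, integral_absRpow_Ici hlam hc]



variable {lam : ℝ}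

lemma integral_Ioo_rpow_base (hlam0 : 0 < lam) (hlam1 : lam < 1) {L : ℝ} (hL : 0 < L) :
    ∫ x in (0:ℝ)..L, x ^ (-lam) = L ^ (1 - lam) / (1 - lam) := by
  rw [integral_rpow (Or.inl (by linarith))]
  have h1 : (-lam + 1 : ℝ) = 1 - lam := by ring
  rw [h1, Real.zero_rpow (by linarith), sub_zero]

lemma intervalIntegrable_rpow_base (hlam1 : lam < 1) (a b : ℝ) :
    IntervalIntegrable (fun x : ℝ => x ^ (-lam)) volume a b :=
  intervalIntegral.intervalIntegrable_rpow' (by linarith)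

-- ∫_{Ioo c (c+L)} (x - c)^(-lam) dx = L^(1-lam)/(1-lam)
lemma integral_sub_right_rpow (hlam0 : 0 < lam) (hlam1 : lam < 1) {c L : ℝ} (hL : 0 < L) :
    ∫ x in Ioo c (c + L), (x - c) ^ (-lam) = L ^ (1 - lam) / (1 - lam) := by
  rw [← integral_Ioc_eq_integral_Ioo, ← intervalIntegral.integral_of_le (by linarith)]
  have h := intervalIntegral.integral_comp_sub_right (a := c) (b := c + L)
    (fun t : ℝ => t ^ (-lam)) c
  simp only [sub_self, add_sub_cancel_left] at h
  rw [h, integral_Ioo_rpow_base hlam0 hlam1 hL]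

lemma integral_sub_left_rpow (hlam0 : 0 < lam) (hlam1 : lam < 1) {c L : ℝ} (hL : 0 < L) :
    ∫ x in Ioo c (c + L), (c + L - x) ^ (-lam) = L ^ (1 - lam) / (1 - lam) := by
  rw [← integral_Ioc_eq_integral_Ioo, ← intervalIntegral.integral_of_le (by linarith)]
  have h := intervalIntegral.integral_comp_sub_left (a := c) (b := c + L)
    (fun t : ℝ => t ^ (-lam)) (c + L)
  simp only [sub_self, add_sub_cancel_left] at h
  rw [h, integral_Ioo_rpow_base hlam0 hlam1 hL]

lemma integrableOn_sub_right_rpow (hlam1 : lam < 1) (c L : ℝ) :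
    IntegrableOn (fun x : ℝ => (x - c) ^ (-lam)) (Ioo c (c + L)) := by
  have h := ((intervalIntegrable_rpow_base hlam1 0 L).comp_sub_right c)
  simp only [zero_add] at h
  have h2 := h.1
  rw [add_comm L c] at h2
  exact h2.mono_set Ioo_subset_Ioc_self

lemma integrableOn_sub_left_rpow (hlam1 : lam < 1) (c L : ℝ) :
    IntegrableOn (fun x : ℝ => (c + L - x) ^ (-lam)) (Ioo c (c + L)) := by
  have h := ((intervalIntegrable_rpow_base hlam1 0 L).comp_sub_left (c + L))
  simp only [sub_zero, add_sub_cancel_right] at h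
  exact (h.symm.1.mono_set Ioo_subset_Ioc_self)

lemma dlam_eq (hlam0 : 0 < lam) (hlam1 : lam < 1) (clam : ℝ) :
    dlam clam lam = clam * (2 / (1 - lam) + 2 / lam) := by
  have hm1 : MeasurableSet {z : ℝ | |z| < 1} :=
    (isOpen_lt continuous_abs continuous_const).measurableSet
  have hm2 : MeasurableSet {z : ℝ | 1 < |z|} :=
    (isOpen_lt continuous_const continuous_abs).measurableSet
  have e1 : ∫ z in {z : ℝ | |z| < 1}, |z| ^ (-lam) = 2 / (1 - lam) := by
    have hi : ∫ z in {z : ℝ | |z| < 1}, |z| ^ (-lam)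
        = ∫ x : ℝ, (Iio (1:ℝ)).indicator (fun t : ℝ => t ^ (-lam)) |x| := by
      rw [← integral_indicator hm1]
      refine integral_congr_ae (Eventually.of_forall fun x => ?_)
      by_cases h : |x| < 1
      · simp [Set.indicator_apply, h]
      · simp [Set.indicator_apply, h]
    rw [hi, integral_comp_abs, setIntegral_indicator measurableSet_Iio, Set.Ioi_inter_Iio,
      ← integral_Ioc_eq_integral_Ioo, ← intervalIntegral.integral_of_le zero_le_one,
      integral_Ioo_rpow_base hlam0 hlam1 one_pos, Real.one_rpow]
    ring
  have e2 : ∫ z in {z : ℝ | 1 < |z|}, |z| ^ (-1 - lam) = 2 / lam := by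
    have hi : ∫ z in {z : ℝ | 1 < |z|}, |z| ^ (-1 - lam)
        = ∫ x : ℝ, (Ioi (1:ℝ)).indicator (fun t : ℝ => t ^ (-1 - lam)) |x| := by
      rw [← integral_indicator hm2]
      refine integral_congr_ae (Eventually.of_forall fun x => ?_)
      by_cases h : 1 < |x|
      · simp [Set.indicator_apply, h]
      · simp [Set.indicator_apply, h]
    have hII : Ioi (0:ℝ) ∩ Ioi 1 = Ioi 1 := by
      rw [Set.Ioi_inter_Ioi]; norm_num
    rw [hi, integral_comp_abs, setIntegral_indicator measurableSet_Ioi, hII,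
      integral_Ioi_rpow_of_lt (hp_lt hlam0) one_pos]
    have h : (-1 - lam + 1 : ℝ) = -lam := by ring
    rw [h, Real.one_rpow]
    field_simp
  rw [dlam, e1, e2]



section core
variable {lam : ℝ}

lemma fracLap_eq (clam lam : ℝ) (φ : ℝ → ℝ) (x : ℝ) :
    fracLap clam lam φ x = clam * ∫ z : ℝ, (φ (x + z) - φ x) / |z| ^ (1 + lam) := by
  unfold fracLap
  rw [MeasureTheory.restrict_compl_singleton]

lemma div_absRpow (a z : ℝ) : a / |z| ^ (1 + lam) = a * |z| ^ (-1 - lam) := by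
  have h : (-1 - lam : ℝ) = -(1 + lam) := by ring
  rw [h, div_eq_mul_inv, Real.rpow_neg (abs_nonneg z)]

lemma cellInd_of_mem {Δx : ℝ} {i : ℤ} {y : ℝ}
    (hy : y ∈ Ioo ((i:ℝ)*Δx) ((i:ℝ)*Δx + Δx)) : cellInd Δx i y = 1 := by
  unfold cellInd
  rw [show (((i:ℝ)+1)*Δx) = (i:ℝ)*Δx + Δx from by ring, Set.indicator_of_mem hy]
  rfl

lemma cellInd_of_not_mem {Δx : ℝ} {i : ℤ} {y : ℝ}
    (hy : y ∉ Ioo ((i:ℝ)*Δx) ((i:ℝ)*Δx + Δx)) : cellInd Δx i y = 0 := by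
  unfold cellInd
  rw [show (((i:ℝ)+1)*Δx) = (i:ℝ)*Δx + Δx from by ring, Set.indicator_of_notMem hy]

lemma fracLap_diag (hlam0 : 0 < lam) (clam Δx : ℝ) (i : ℤ) {x : ℝ}
    (hx : x ∈ Ioo ((i:ℝ)*Δx) ((i:ℝ)*Δx + Δx)) :
    fracLap clam lam (cellInd Δx i) x
      = -(clam/lam) * ((x - (i:ℝ)*Δx) ^ (-lam) + ((i:ℝ)*Δx + Δx - x) ^ (-lam)) := by
  set xi := (i:ℝ)*Δx with hxi
  obtain ⟨hx1, hx2⟩ := hx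
  have key : ∀ z : ℝ, (cellInd Δx i (x + z) - cellInd Δx i x) / |z| ^ (1 + lam)
      = -((Iic (xi - x) ∪ Ici (xi + Δx - x)).indicator
          (fun z : ℝ => |z| ^ (-1 - lam)) z) := by
    intro z
    rw [cellInd_of_mem ⟨hx1, hx2⟩]
    by_cases hz : x + z ∈ Ioo xi (xi + Δx)
    · rw [cellInd_of_mem hz, Set.indicator_of_notMem]
      · simp
      · intro hmem
        rcases hmem with h | h
        · rw [mem_Iic] at h; have := hz.1; linarith
        · rw [mem_Ici] at h; have := hz.2; linarith
    · rw [cellInd_of_not_mem hz, Set.indicator_of_mem]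
      · rw [zero_sub, neg_div, div_absRpow, one_mul]
      · rw [mem_Ioo] at hz; push_neg at hz
        rcases le_or_gt z (xi - x) with h | h
        · exact Or.inl (mem_Iic.mpr h)
        · exact Or.inr (mem_Ici.mpr (by have := hz (by linarith); linarith))
  have hdisj : Disjoint (Iic (xi - x)) (Ici (xi + Δx - x)) := by
    rw [Set.disjoint_left]
    intro z h1 h2
    rw [mem_Iic] at h1; rw [mem_Ici] at h2; linarith
  have hIic : Iic (xi - x) = Iic (-(x - xi)) := by ring_nf
  have hint1 : IntegrableOn (fun z : ℝ => |z| ^ (-1 - lam)) (Iic (xi - x)) := by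
    rw [hIic]; exact integrableOn_absRpow_Iic hlam0 (by linarith)
  have hint2 : IntegrableOn (fun z : ℝ => |z| ^ (-1 - lam)) (Ici (xi + Δx - x)) :=
    integrableOn_absRpow_Ici hlam0 (by linarith)
  rw [fracLap_eq]
  rw [integral_congr_ae (Eventually.of_forall key), integral_neg,
    integral_indicator (measurableSet_Iic.union measurableSet_Ici),
    setIntegral_union hdisj measurableSet_Ici hint1 hint2]
  rw [hIic, integral_absRpow_Iic hlam0 (by linarith),
    integral_absRpow_Ici hlam0 (by linarith)]
  ring

lemma Gw_diag (hlam0 : 0 < lam) (hlam1 : lam < 1) (clam : ℝ) {Δx : ℝ} (hΔx : 0 < Δx)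
    (i : ℤ) :
    Gw clam lam Δx i i = -(clam/lam) * (2 * Δx ^ (1 - lam) / (1 - lam)) := by
  unfold Gw
  rw [show (((i:ℝ)+1)*Δx) = (i:ℝ)*Δx + Δx from by ring]
  rw [setIntegral_congr_fun measurableSet_Ioo
    (fun x hx => fracLap_diag hlam0 clam Δx i hx)]
  rw [integral_const_mul,
    integral_add (integrableOn_sub_right_rpow hlam1 _ _) (integrableOn_sub_left_rpow hlam1 _ _),
    integral_sub_right_rpow hlam0 hlam1 hΔx, integral_sub_left_rpow hlam0 hlam1 hΔx]
  ring

lemma Gw_diag_ge (hlam0 : 0 < lam) (hlam1 : lam < 1) (clam : ℝ) {Δx : ℝ} (hΔx : 0 < Δx)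
    (i : ℤ) :
    -(dlam clam lam * Δx ^ (1 - lam)) ≤ Gw clam lam Δx i i := by
  rw [Gw_diag hlam0 hlam1 clam hΔx i, dlam_eq hlam0 hlam1 clam]
  apply le_of_eq
  have h1 : lam ≠ 0 := ne_of_gt hlam0
  have h2 : (1 - lam : ℝ) ≠ 0 := by intro h; rw [sub_eq_zero] at h; exact absurd h.symm (ne_of_lt hlam1)
  field_simp
  ring


lemma cellInd_nonneg (Δx : ℝ) (j : ℤ) (y : ℝ) : 0 ≤ cellInd Δx j y := by
  unfold cellInd
  exact Set.indicator_nonneg (fun _ _ => zero_le_one) y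

lemma cellInd_offcell {Δx : ℝ} (hΔx : 0 < Δx) {i j : ℤ} (hij : i ≠ j) {x : ℝ}
    (hx : x ∈ Ioo ((i:ℝ)*Δx) ((i:ℝ)*Δx + Δx)) : cellInd Δx j x = 0 := by
  apply cellInd_of_not_mem
  intro hmem
  rcases lt_or_gt_of_ne hij with h | h
  · -- i < j : x < (i+1)Δx ≤ jΔx
    have hc : ((i:ℝ) + 1) ≤ (j:ℝ) := by exact_mod_cast h
    have := hmem.1
    have h2 := hx.2
    nlinarith
  · -- j < i : (j+1)Δx ≤ iΔx < x
    have hc : ((j:ℝ) + 1) ≤ (i:ℝ) := by exact_mod_cast h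
    have := hmem.2
    have h1 := hx.1
    nlinarith

lemma fracLap_offdiag_nonneg {clam : ℝ} (hclam : 0 ≤ clam) {Δx : ℝ} (hΔx : 0 < Δx)
    {i j : ℤ} (hij : i ≠ j) {x : ℝ}
    (hx : x ∈ Ioo ((i:ℝ)*Δx) ((i:ℝ)*Δx + Δx)) :
    0 ≤ fracLap clam lam (cellInd Δx j) x := by
  rw [fracLap_eq]
  apply mul_nonneg hclam
  apply integral_nonneg
  intro z
  simp only [Pi.zero_apply, cellInd_offcell hΔx hij hx, sub_zero]
  exact div_nonneg (cellInd_nonneg Δx j (x+z)) (Real.rpow_nonneg (abs_nonneg z) _)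

lemma fracLap_offdiag_le_gt (hlam0 : 0 < lam) {clam : ℝ} (hclam : 0 ≤ clam)
    {Δx : ℝ} (hΔx : 0 < Δx) {i j : ℤ} (hij : i < j) {x : ℝ}
    (hx : x ∈ Ioo ((i:ℝ)*Δx) ((i:ℝ)*Δx + Δx)) :
    fracLap clam lam (cellInd Δx j) x ≤ clam / lam * ((i:ℝ)*Δx + Δx - x) ^ (-lam) := by
  set xi := (i:ℝ)*Δx with hxi
  set b := (j:ℝ)*Δx - x with hbdef
  have hc : ((i:ℝ) + 1) ≤ (j:ℝ) := by exact_mod_cast hij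
  have hb1 : xi + Δx - x ≤ b := by rw [hbdef, hxi]; nlinarith
  have hb0 : 0 < xi + Δx - x := by have := hx.2; linarith
  have hb : 0 < b := lt_of_lt_of_le hb0 hb1
  rw [fracLap_eq]
  have hg : Integrable ((Ici b).indicator (fun z : ℝ => |z| ^ (-1 - lam))) volume :=
    (integrableOn_absRpow_Ici hlam0 hb).integrable_indicator measurableSet_Ici
  have step : (∫ z : ℝ, (cellInd Δx j (x + z) - cellInd Δx j x) / |z| ^ (1 + lam))
      ≤ ∫ z : ℝ, (Ici b).indicator (fun z : ℝ => |z| ^ (-1 - lam)) z := by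
    apply integral_mono_of_nonneg _ hg
    · apply Eventually.of_forall
      intro z
      simp only [cellInd_offcell hΔx (ne_of_lt hij) hx, sub_zero]
      by_cases hz : x + z ∈ Ioo ((j:ℝ)*Δx) ((j:ℝ)*Δx + Δx)
      · rw [cellInd_of_mem hz, div_absRpow, one_mul,
          Set.indicator_of_mem (mem_Ici.mpr (by have := hz.1; rw [hbdef]; linarith))]
      · rw [cellInd_of_not_mem hz, zero_div]
        exact Set.indicator_nonneg (fun t _ => Real.rpow_nonneg (abs_nonneg t) _) z
    · apply Eventually.of_forall
      intro z
      simp only [Pi.zero_apply, cellInd_offcell hΔx (ne_of_lt hij) hx, sub_zero]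
      exact div_nonneg (cellInd_nonneg Δx j (x+z)) (Real.rpow_nonneg (abs_nonneg z) _)
  have hval : (∫ z : ℝ, (Ici b).indicator (fun z : ℝ => |z| ^ (-1 - lam)) z)
      = b ^ (-lam) / lam := by
    rw [integral_indicator measurableSet_Ici, integral_absRpow_Ici hlam0 hb]
  calc clam * ∫ z : ℝ, (cellInd Δx j (x + z) - cellInd Δx j x) / |z| ^ (1 + lam)
      ≤ clam * (b ^ (-lam) / lam) := by
        rw [← hval]; exact mul_le_mul_of_nonneg_left step hclam
    _ ≤ clam * ((xi + Δx - x) ^ (-lam) / lam) := by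
        apply mul_le_mul_of_nonneg_left _ hclam
        rw [div_le_div_iff_of_pos_right hlam0]
        exact Real.rpow_le_rpow_of_nonpos hb0 hb1 (by linarith)
    _ = clam / lam * (xi + Δx - x) ^ (-lam) := by ring

lemma fracLap_offdiag_le_lt (hlam0 : 0 < lam) {clam : ℝ} (hclam : 0 ≤ clam)
    {Δx : ℝ} (hΔx : 0 < Δx) {i j : ℤ} (hij : j < i) {x : ℝ}
    (hx : x ∈ Ioo ((i:ℝ)*Δx) ((i:ℝ)*Δx + Δx)) :
    fracLap clam lam (cellInd Δx j) x ≤ clam / lam * (x - (i:ℝ)*Δx) ^ (-lam) := by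
  set xi := (i:ℝ)*Δx with hxi
  set c := x - ((j:ℝ)*Δx + Δx) with hcdef
  have hcst : ((j:ℝ) + 1) ≤ (i:ℝ) := by exact_mod_cast hij
  have hb1 : x - xi ≤ c := by rw [hcdef, hxi]; nlinarith
  have hb0 : 0 < x - xi := by have := hx.1; linarith
  have hc0 : 0 < c := lt_of_lt_of_le hb0 hb1
  rw [fracLap_eq]
  have hg : Integrable ((Iic (-c)).indicator (fun z : ℝ => |z| ^ (-1 - lam))) volume :=
    (integrableOn_absRpow_Iic hlam0 hc0).integrable_indicator measurableSet_Iic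
  have step : (∫ z : ℝ, (cellInd Δx j (x + z) - cellInd Δx j x) / |z| ^ (1 + lam))
      ≤ ∫ z : ℝ, (Iic (-c)).indicator (fun z : ℝ => |z| ^ (-1 - lam)) z := by
    apply integral_mono_of_nonneg _ hg
    · apply Eventually.of_forall
      intro z
      simp only [cellInd_offcell hΔx (ne_of_gt hij) hx, sub_zero]
      by_cases hz : x + z ∈ Ioo ((j:ℝ)*Δx) ((j:ℝ)*Δx + Δx)
      · rw [cellInd_of_mem hz, div_absRpow, one_mul,
          Set.indicator_of_mem (mem_Iic.mpr (by have := hz.2; rw [hcdef]; linarith))]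
      · rw [cellInd_of_not_mem hz, zero_div]
        exact Set.indicator_nonneg (fun t _ => Real.rpow_nonneg (abs_nonneg t) _) z
    · apply Eventually.of_forall
      intro z
      simp only [Pi.zero_apply, cellInd_offcell hΔx (ne_of_gt hij) hx, sub_zero]
      exact div_nonneg (cellInd_nonneg Δx j (x+z)) (Real.rpow_nonneg (abs_nonneg z) _)
  have hval : (∫ z : ℝ, (Iic (-c)).indicator (fun z : ℝ => |z| ^ (-1 - lam)) z)
      = c ^ (-lam) / lam := by
    rw [integral_indicator measurableSet_Iic, integral_absRpow_Iic hlam0 hc0]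
  calc clam * ∫ z : ℝ, (cellInd Δx j (x + z) - cellInd Δx j x) / |z| ^ (1 + lam)
      ≤ clam * (c ^ (-lam) / lam) := by
        rw [← hval]; exact mul_le_mul_of_nonneg_left step hclam
    _ ≤ clam * ((x - xi) ^ (-lam) / lam) := by
        apply mul_le_mul_of_nonneg_left _ hclam
        rw [div_le_div_iff_of_pos_right hlam0]
        exact Real.rpow_le_rpow_of_nonpos hb0 hb1 (by linarith)
    _ = clam / lam * (x - xi) ^ (-lam) := by ring


lemma Gw_offdiag_nonneg {clam : ℝ} (hclam : 0 ≤ clam) {Δx : ℝ} (hΔx : 0 < Δx)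
    {i j : ℤ} (hij : i ≠ j) : 0 ≤ Gw clam lam Δx i j := by
  unfold Gw
  rw [show (((i:ℝ)+1)*Δx) = (i:ℝ)*Δx + Δx from by ring]
  exact setIntegral_nonneg measurableSet_Ioo
    (fun x hx => fracLap_offdiag_nonneg hclam hΔx hij hx)

lemma Gw_offdiag_le (hlam0 : 0 < lam) (hlam1 : lam < 1) {clam : ℝ} (hclam : 0 ≤ clam)
    {Δx : ℝ} (hΔx : 0 < Δx) {i j : ℤ} (hij : i ≠ j) :
    Gw clam lam Δx i j ≤ clam / lam * (Δx ^ (1 - lam) / (1 - lam)) := by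
  unfold Gw
  rw [show (((i:ℝ)+1)*Δx) = (i:ℝ)*Δx + Δx from by ring]
  rcases lt_or_gt_of_ne hij with h | h
  · have hmono := integral_mono_of_nonneg
      (f := fun x => fracLap clam lam (cellInd Δx j) x)
      (g := fun x => clam / lam * ((i:ℝ)*Δx + Δx - x) ^ (-lam))
      (μ := volume.restrict (Ioo ((i:ℝ)*Δx) ((i:ℝ)*Δx + Δx)))
      ((ae_restrict_iff' measurableSet_Ioo).mpr (Eventually.of_forall
        (fun x hx => fracLap_offdiag_nonneg hclam hΔx hij hx)))
      ((integrableOn_sub_left_rpow hlam1 ((i:ℝ)*Δx) Δx).const_mul _)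
      ((ae_restrict_iff' measurableSet_Ioo).mpr (Eventually.of_forall
        (fun x hx => fracLap_offdiag_le_gt hlam0 hclam hΔx h hx)))
    rw [integral_const_mul, integral_sub_left_rpow hlam0 hlam1 hΔx] at hmono
    exact le_trans hmono (le_of_eq (by ring))
  · have hmono := integral_mono_of_nonneg
      (f := fun x => fracLap clam lam (cellInd Δx j) x)
      (g := fun x => clam / lam * (x - (i:ℝ)*Δx) ^ (-lam))
      (μ := volume.restrict (Ioo ((i:ℝ)*Δx) ((i:ℝ)*Δx + Δx)))
      ((ae_restrict_iff' measurableSet_Ioo).mpr (Eventually.of_forall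
        (fun x hx => fracLap_offdiag_nonneg hclam hΔx hij hx)))
      ((integrableOn_sub_right_rpow hlam1 ((i:ℝ)*Δx) Δx).const_mul _)
      ((ae_restrict_iff' measurableSet_Ioo).mpr (Eventually.of_forall
        (fun x hx => fracLap_offdiag_le_lt hlam0 hclam hΔx h hx)))
    rw [integral_const_mul, integral_sub_right_rpow hlam0 hlam1 hΔx] at hmono
    exact le_trans hmono (le_of_eq (by ring))

lemma Gw_diag_eq (hlam0 : 0 < lam) (hlam1 : lam < 1) (clam : ℝ) {Δx : ℝ} (hΔx : 0 < Δx)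
    (i : ℤ) : Gw clam lam Δx i i = -(dlam clam lam * Δx ^ (1 - lam)) := by
  rw [Gw_diag hlam0 hlam1 clam hΔx i, dlam_eq hlam0 hlam1 clam]
  have h1 : lam ≠ 0 := ne_of_gt hlam0
  have h2 : (1 - lam : ℝ) ≠ 0 := by
    intro h; rw [sub_eq_zero] at h; exact absurd h.symm (ne_of_lt hlam1)
  field_simp
  ring

lemma dlam_nonneg (hlam0 : 0 < lam) (hlam1 : lam < 1) {clam : ℝ} (hclam : 0 ≤ clam) :
    0 ≤ dlam clam lam := by
  rw [dlam_eq hlam0 hlam1 clam]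
  have h1 : (0:ℝ) ≤ 2 / (1 - lam) := by
    apply div_nonneg (by norm_num); linarith
  have h2 : (0:ℝ) ≤ 2 / lam := div_nonneg (by norm_num) hlam0.le
  exact mul_nonneg hclam (by linarith)

lemma Gw_abs_bound (hlam0 : 0 < lam) (hlam1 : lam < 1) {clam : ℝ} (hclam : 0 ≤ clam)
    {Δx : ℝ} (hΔx : 0 < Δx) (i j : ℤ) :
    |Gw clam lam Δx i j| ≤
      max (dlam clam lam * Δx ^ (1 - lam)) (clam / lam * (Δx ^ (1 - lam) / (1 - lam))) := by
  by_cases h : j = i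
  · subst h
    rw [Gw_diag_eq hlam0 hlam1 clam hΔx j, abs_neg,
      abs_of_nonneg (mul_nonneg (dlam_nonneg hlam0 hlam1 hclam)
        (Real.rpow_nonneg hΔx.le _))]
    exact le_max_left _ _
  · rw [abs_of_nonneg (Gw_offdiag_nonneg hclam hΔx (Ne.symm h))]
    exact le_trans (Gw_offdiag_le hlam0 hlam1 hclam hΔx (Ne.symm h)) (le_max_right _ _)

lemma summable_GwMul (hlam0 : 0 < lam) (hlam1 : lam < 1) {clam : ℝ} (hclam : 0 ≤ clam)
    {Δx : ℝ} (hΔx : 0 < Δx) {U : ℤ → ℝ} (hU : Summable U) (i : ℤ) :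
    Summable (fun j => Gw clam lam Δx i j * U j) := by
  set C := max (dlam clam lam * Δx ^ (1 - lam))
    (clam / lam * (Δx ^ (1 - lam) / (1 - lam))) with hC
  apply Summable.of_norm_bounded
    ((summable_abs_iff.mpr hU).mul_left C)
  intro j
  rw [norm_mul, Real.norm_eq_abs, Real.norm_eq_abs]
  exact mul_le_mul_of_nonneg_right (Gw_abs_bound hlam0 hlam1 hclam hΔx i j) (abs_nonneg _)

end core

end SchemeHelpers

set_option maxHeartbeats 1000000

/-- Under the CFL condition the one-step scheme map is monotone: `U ≤ V` componentwise
implies `S(U) ≤ S(V)` componentwise. -/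
theorem scheme_monotone (lam : ℝ) (hlam : lam ∈ Set.Ioo (0 : ℝ) 1)
    (clam : ℝ) (hclam : 0 < clam) (Δx Δt : ℝ) (hΔx : 0 < Δx) (hΔt : 0 < Δt)
    (b : ℝ) (hb : 0 ≤ b) (f a : ℝ → ℝ) (fhat : ℝ → ℝ → ℝ)
    (hdata : SchemeData f a fhat)
    (hcfl : CFL clam lam Δx Δt b fhat a)
    (U V : ℤ → ℝ) (hU : Summable U) (hV : Summable V) (hUV : ∀ j : ℤ, U j ≤ V j) :
    ∀ i : ℤ, schemeStep clam lam Δx Δt b fhat a U i ≤ schemeStep clam lam Δx Δt b fhat a V i := by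
  obtain ⟨hlam0, hlam1⟩ := hlam
  obtain ⟨hC1, M1, M2, Ma, hM1, hM2, hMa, hineq⟩ := hcfl
  intro i
  have hM1' : 0 ≤ M1 := le_trans (abs_nonneg _) (hM1 0 0)
  have hM2' : 0 ≤ M2 := le_trans (abs_nonneg _) (hM2 0 0)
  have hMa' : 0 ≤ Ma := le_trans (abs_nonneg _) (hMa 0)
  -- Lipschitz bounds from derivative bounds
  have hdiff1 : ∀ v : ℝ, Differentiable ℝ (fun s => fhat s v) := fun v =>
    (hC1.differentiable one_ne_zero).comp (differentiable_id.prodMk (differentiable_const v))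
  have hdiff2 : ∀ u : ℝ, Differentiable ℝ (fun s => fhat u s) := fun u =>
    (hC1.differentiable one_ne_zero).comp ((differentiable_const u).prodMk differentiable_id)
  have hlip1 : ∀ v u u' : ℝ, |fhat u' v - fhat u v| ≤ M1 * |u' - u| := by
    intro v u u'
    have hl : LipschitzWith M1.toNNReal (fun s => fhat s v) := by
      apply lipschitzWith_of_nnnorm_deriv_le (hdiff1 v)
      intro x
      rw [← NNReal.coe_le_coe, coe_nnnorm, Real.norm_eq_abs, Real.coe_toNNReal _ hM1']
      exact hM1 x v
    have h := hl.dist_le_mul u' u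
    rwa [Real.dist_eq, Real.dist_eq, Real.coe_toNNReal _ hM1'] at h
  have hlip2 : ∀ u v v' : ℝ, |fhat u v' - fhat u v| ≤ M2 * |v' - v| := by
    intro u v v'
    have hl : LipschitzWith M2.toNNReal (fun s => fhat u s) := by
      apply lipschitzWith_of_nnnorm_deriv_le (hdiff2 u)
      intro x
      rw [← NNReal.coe_le_coe, coe_nnnorm, Real.norm_eq_abs, Real.coe_toNNReal _ hM2']
      exact hM2 u x
    have h := hl.dist_le_mul v' v
    rwa [Real.dist_eq, Real.dist_eq, Real.coe_toNNReal _ hM2'] at h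
  -- A bounds
  obtain ⟨Ka, haLip⟩ := hdata.haLip
  have haCont : Continuous a := haLip.continuous
  have hAdiff : ∀ u v : ℝ, Aint a v - Aint a u = ∫ s in u..v, a s := by
    intro u v
    exact intervalIntegral.integral_interval_sub_left
      (haCont.intervalIntegrable _ _) (haCont.intervalIntegrable _ _)
  have hA_nonneg : ∀ u v : ℝ, u ≤ v → 0 ≤ Aint a v - Aint a u := by
    intro u v huv
    rw [hAdiff u v]
    exact intervalIntegral.integral_nonneg huv (fun x _ => hdata.haNonneg x)
  have hA_le : ∀ u v : ℝ, u ≤ v → Aint a v - Aint a u ≤ Ma * (v - u) := by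
    intro u v huv
    rw [hAdiff u v]
    have h := intervalIntegral.norm_integral_le_of_norm_le_const (C := Ma)
      (f := a) (a := u) (b := v)
      (fun x _ => by rw [Real.norm_eq_abs]; exact hMa x)
    rw [Real.norm_eq_abs, abs_of_nonneg (sub_nonneg.mpr huv)] at h
    exact le_trans (le_abs_self _) h
  -- tsum bound
  have hclam0 : (0:ℝ) ≤ clam := hclam.le
  have hGU : Summable (fun j => Gw clam lam Δx i j * U j) :=
    summable_GwMul hlam0 hlam1 hclam0 hΔx hU i
  have hGV : Summable (fun j => Gw clam lam Δx i j * V j) :=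
    summable_GwMul hlam0 hlam1 hclam0 hΔx hV i
  have hGD : Summable (fun j => Gw clam lam Δx i j * (V j - U j)) :=
    (hGV.sub hGU).congr (fun j => (mul_sub _ _ _).symm)
  have htsub : (∑' j : ℤ, Gw clam lam Δx i j * V j) - (∑' j : ℤ, Gw clam lam Δx i j * U j)
      = ∑' j : ℤ, Gw clam lam Δx i j * (V j - U j) := by
    rw [← hGV.tsum_sub hGU]
    exact tsum_congr (fun j => (mul_sub _ _ _).symm)
  have hsplit : (∑' j : ℤ, Gw clam lam Δx i j * (V j - U j))
      = Gw clam lam Δx i i * (V i - U i)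
        + ∑' j : ℤ, ite (j = i) 0 (Gw clam lam Δx i j * (V j - U j)) :=
    hGD.tsum_eq_add_tsum_ite i
  have hrest : 0 ≤ ∑' j : ℤ, ite (j = i) 0 (Gw clam lam Δx i j * (V j - U j)) := by
    apply tsum_nonneg
    intro j
    by_cases h : j = i
    · simp [h]
    · simp only [h, if_false]
      exact mul_nonneg (Gw_offdiag_nonneg hclam0 hΔx (Ne.symm h))
        (sub_nonneg.mpr (hUV j))
  have hdiag : -(dlam clam lam * Δx ^ (1 - lam)) * (V i - U i)
      ≤ Gw clam lam Δx i i * (V i - U i) :=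
    mul_le_mul_of_nonneg_right (Gw_diag_ge hlam0 hlam1 clam hΔx i)
      (sub_nonneg.mpr (hUV i))
  have hT : -(dlam clam lam * Δx ^ (1 - lam)) * (V i - U i)
      ≤ (∑' j : ℤ, Gw clam lam Δx i j * V j) - (∑' j : ℤ, Gw clam lam Δx i j * U j) := by
    rw [htsub, hsplit]; linarith
  -- flux bound
  have hDU0 : 0 ≤ V i - U i := sub_nonneg.mpr (hUV i)
  have hF : (fhat (V i) (V (i+1)) - fhat (V (i-1)) (V i))
      - (fhat (U i) (U (i+1)) - fhat (U (i-1)) (U i)) ≤ (M1 + M2) * (V i - U i) := by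
    have h1 : fhat (V i) (V (i+1)) - fhat (U i) (V (i+1)) ≤ M1 * (V i - U i) := by
      have h := le_trans (le_abs_self _) (hlip1 (V (i+1)) (U i) (V i))
      rwa [abs_of_nonneg hDU0] at h
    have h2 : fhat (U i) (V (i+1)) ≤ fhat (U i) (U (i+1)) := hdata.hmono2 (U i) (hUV (i+1))
    have h3 : fhat (U (i-1)) (V i) ≤ fhat (V (i-1)) (V i) := hdata.hmono1 (V i) (hUV (i-1))
    have h4 : fhat (U (i-1)) (U i) - fhat (U (i-1)) (V i) ≤ M2 * (V i - U i) := by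
      have h := hlip2 (U (i-1)) (V i) (U i)
      have h' := le_trans (le_abs_self _) h
      rwa [abs_sub_comm, abs_of_nonneg hDU0] at h'
    linarith
  -- A bounds at the three points
  have hA1 : 0 ≤ Aint a (V (i+1)) - Aint a (U (i+1)) := hA_nonneg _ _ (hUV _)
  have hA3 : 0 ≤ Aint a (V (i-1)) - Aint a (U (i-1)) := hA_nonneg _ _ (hUV _)
  have hA2 : Aint a (V i) - Aint a (U i) ≤ Ma * (V i - U i) := hA_le _ _ (hUV i)
  -- coefficients
  have hk1 : (0:ℝ) ≤ Δt / Δx := by positivity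
  have hk2 : (0:ℝ) ≤ Δt / Δx ^ 2 := by positivity
  have hk3 : (0:ℝ) ≤ b * Δt / Δx := by positivity
  have p1 : Δt / Δx * ((fhat (V i) (V (i+1)) - fhat (V (i-1)) (V i))
        - (fhat (U i) (U (i+1)) - fhat (U (i-1)) (U i)))
      ≤ Δt / Δx * ((M1 + M2) * (V i - U i)) := mul_le_mul_of_nonneg_left hF hk1
  have p2 : Δt / Δx ^ 2 * (-(2 * Ma * (V i - U i)))
      ≤ Δt / Δx ^ 2 * ((Aint a (V (i+1)) - 2 * Aint a (V i) + Aint a (V (i-1)))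
        - (Aint a (U (i+1)) - 2 * Aint a (U i) + Aint a (U (i-1)))) :=
    mul_le_mul_of_nonneg_left (by linarith) hk2
  have p3 : b * Δt / Δx * (-(dlam clam lam * Δx ^ (1 - lam)) * (V i - U i))
      ≤ b * Δt / Δx * ((∑' j : ℤ, Gw clam lam Δx i j * V j)
        - (∑' j : ℤ, Gw clam lam Δx i j * U j)) := mul_le_mul_of_nonneg_left hT hk3
  -- CFL consequence
  have hxl : (0:ℝ) < Δx ^ lam := Real.rpow_pos_of_pos hΔx lam
  have hxx : Δx ^ (1 - lam) = Δx / Δx ^ lam := by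
    rw [eq_div_iff (ne_of_gt hxl), ← Real.rpow_add hΔx,
      show (1 - lam) + lam = (1:ℝ) from by ring, Real.rpow_one]
  have e3 : b * Δt / Δx * (dlam clam lam * Δx ^ (1 - lam) * (V i - U i))
      = (b * dlam clam lam * Δt / Δx ^ lam) * (V i - U i) := by
    rw [hxx]
    field_simp
  have q : Δt / Δx * ((M1 + M2) * (V i - U i)) + Δt / Δx ^ 2 * (2 * Ma * (V i - U i))
      + b * Δt / Δx * (dlam clam lam * Δx ^ (1 - lam) * (V i - U i)) ≤ V i - U i := by
    have h := mul_le_mul_of_nonneg_right hineq hDU0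
    rw [one_mul] at h
    calc Δt / Δx * ((M1 + M2) * (V i - U i)) + Δt / Δx ^ 2 * (2 * Ma * (V i - U i))
          + b * Δt / Δx * (dlam clam lam * Δx ^ (1 - lam) * (V i - U i))
        = ((Δt / Δx) * (M1 + M2) + (2 * Δt / Δx ^ 2) * Ma
            + b * dlam clam lam * Δt / Δx ^ lam) * (V i - U i) := by
          rw [e3]; ring
      _ ≤ V i - U i := h
  simp only [schemeStep]
  linarith [p1, p2, p3, q]
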